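/- Let α ∈ (0,1], let n1, n2 ≥ 2 be integers and b1, b2 ∈ (0,1) satisfy n_i · b_i^α = 1 for i = 1,2, and suppose (log n1)/(log n2) is irrational. If ψ : (0,1) → ℝ is continuous and satisfies ψ(u) = n_i · ψ(b_i u) for all u ∈ (0,1) and i = 1,2, then there is a constant λ such that ψ(u) = λ u^α for all u ∈ (0,1). Consequently, a discrete random variable that can be expressed as a sum of n1 and also of n2 i.i.d. variables of its same D-type (with ratios b1, b2 respectively), with (log n1)/(log n2) irrational, is α-Poisson. -/

import Mathlib

open Real Set

/-- If a continuous `ψ` on `(0,1)` satisfies the two semi-stable scaling relations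
`ψ(u) = nᵢ ψ(bᵢ u)` with `nᵢ bᵢ^α = 1` and `(log n₁)/(log n₂)` irrational, then
`ψ(u) = λ u^α`; hence the corresponding discrete variable is α-Poisson. -/
theorem two_scalings_irrational_implies_alpha_poisson (α : ℝ) (hα : α ∈ Set.Ioc (0 : ℝ) 1)
    (n1 n2 : ℕ) (hn1 : 2 ≤ n1) (hn2 : 2 ≤ n2)
    (b1 b2 : ℝ) (hb1 : b1 ∈ Set.Ioo (0 : ℝ) 1) (hb2 : b2 ∈ Set.Ioo (0 : ℝ) 1)
    (h1 : (n1 : ℝ) * b1 ^ α = 1) (h2 : (n2 : ℝ) * b2 ^ α = 1)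
    (hirr : Irrational (Real.log n1 / Real.log n2))
    (ψ : ℝ → ℝ) (hcont : ContinuousOn ψ (Set.Ioo 0 1))
    (hψ1 : ∀ u ∈ Set.Ioo (0 : ℝ) 1, ψ u = n1 * ψ (b1 * u))
    (hψ2 : ∀ u ∈ Set.Ioo (0 : ℝ) 1, ψ u = n2 * ψ (b2 * u)) :
    ∃ lam : ℝ, ∀ u ∈ Set.Ioo (0 : ℝ) 1, ψ u = lam * u ^ α := by
  obtain ⟨hα0, hα1⟩ := hα
  obtain ⟨hb1p, hb1lt⟩ := hb1
  obtain ⟨hb2p, hb2lt⟩ := hb2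
  have hn1p : (0:ℝ) < (n1:ℝ) := by positivity
  have hn1ne : (n1:ℝ) ≠ 0 := ne_of_gt hn1p
  have hn2p : (0:ℝ) < (n2:ℝ) := by
    have : (0:ℕ) < n2 := by omega
    exact_mod_cast this
  have hn1p' : (0:ℕ) < n1 := by omega
  -- the invariant function g
  set g : ℝ → ℝ := fun t => ψ t / t ^ α with hgdef
  have hgcont : ContinuousOn g (Set.Ioo 0 1) := by
    apply hcont.div
    · intro t ht
      exact (Real.continuousAt_rpow_const t α (Or.inr hα0.le)).continuousWithinAt
    · intro t ht
      exact ne_of_gt (Real.rpow_pos_of_pos ht.1 α)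
  -- b * t stays in (0,1)
  have hmem : ∀ (b : ℝ), 0 < b → b < 1 → ∀ t ∈ Set.Ioo (0:ℝ) 1, b * t ∈ Set.Ioo (0:ℝ) 1 := by
    intro b hb hb' t ht
    constructor
    · exact mul_pos hb ht.1
    · nlinarith [ht.1, ht.2]
  -- one-step invariance
  have hstep : ∀ (b : ℝ) (n : ℕ), 0 < b → b < 1 → (n:ℝ) * b ^ α = 1 →
      (∀ u ∈ Set.Ioo (0 : ℝ) 1, ψ u = n * ψ (b * u)) →
      ∀ t ∈ Set.Ioo (0:ℝ) 1, g (b * t) = g t := by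
    intro b n hb hb' hnb hψb t ht
    have htp := ht.1
    have hbα : (0:ℝ) < b ^ α := Real.rpow_pos_of_pos hb α
    have htα : (0:ℝ) < t ^ α := Real.rpow_pos_of_pos htp α
    have hmul : (b * t) ^ α = b ^ α * t ^ α := Real.mul_rpow hb.le htp.le
    have hne : (n:ℝ) ≠ 0 := by
      intro h; rw [h, zero_mul] at hnb; exact zero_ne_one hnb
    have hψt := hψb t ht
    have hL : g (b * t) = ψ (b * t) / (b ^ α * t ^ α) := by
      simp only [hgdef]; rw [hmul]
    have hR : g t = ψ t / t ^ α := rfl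
    rw [hL, hR, hψt, div_eq_div_iff (by positivity) (by positivity)]
    calc ψ (b * t) * t ^ α = ((n:ℝ) * b ^ α) * (ψ (b * t) * t ^ α) := by rw [hnb]; ring
      _ = (n:ℝ) * ψ (b * t) * (b ^ α * t ^ α) := by ring
  have hstep1 : ∀ t ∈ Set.Ioo (0:ℝ) 1, g (b1 * t) = g t :=
    hstep b1 n1 hb1p hb1lt h1 hψ1
  have hstep2 : ∀ t ∈ Set.Ioo (0:ℝ) 1, g (b2 * t) = g t :=
    hstep b2 n2 hb2p hb2lt h2 hψ2
  -- iterated invariance under b1 powers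
  have hpow1 : ∀ (k : ℕ) (t : ℝ), t ∈ Set.Ioo (0:ℝ) 1 →
      b1 ^ k * t ∈ Set.Ioo (0:ℝ) 1 ∧ g (b1 ^ k * t) = g t := by
    intro k
    induction k with
    | zero => intro t ht; rw [pow_zero, one_mul]; exact ⟨ht, rfl⟩
    | succ k ih =>
      intro t ht
      obtain ⟨hmem', heq⟩ := ih t ht
      have h3 : b1 ^ (k+1) * t = b1 * (b1 ^ k * t) := by ring
      refine ⟨by rw [h3]; exact hmem b1 hb1p hb1lt _ hmem', ?_⟩
      rw [h3, hstep1 _ hmem', heq]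
  -- existence of shrinking exponent
  have hex : ∀ x : ℝ, ∃ m : ℕ, b1 ^ m * Real.exp x < 1 := by
    intro x
    obtain ⟨m, hm⟩ := exists_pow_lt_of_lt_one (Real.exp_pos (-x)) hb1lt
    refine ⟨m, ?_⟩
    have := mul_lt_mul_of_pos_right hm (Real.exp_pos x)
    rwa [← Real.exp_add, neg_add_cancel, Real.exp_zero] at this
  set M : ℝ → ℕ := fun x => Nat.find (hex x) with hMdef
  set h : ℝ → ℝ := fun x => g (b1 ^ (M x) * Real.exp x) with hhdef
  have hMspec : ∀ x, b1 ^ (M x) * Real.exp x < 1 := fun x => Nat.find_spec (hex x)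
  have hmemIoo : ∀ (m : ℕ) (x : ℝ), b1 ^ m * Real.exp x < 1 →
      b1 ^ m * Real.exp x ∈ Set.Ioo (0:ℝ) 1 := by
    intro m x hlt
    exact ⟨by positivity, hlt⟩
  -- well-definedness
  have hwd : ∀ (x : ℝ) (m : ℕ), b1 ^ m * Real.exp x < 1 →
      g (b1 ^ m * Real.exp x) = h x := by
    have key : ∀ (m m' : ℕ), m ≤ m' → ∀ x, b1 ^ m * Real.exp x < 1 →
        g (b1 ^ m' * Real.exp x) = g (b1 ^ m * Real.exp x) := by
      intro m m' hle x hlt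
      obtain ⟨k, rfl⟩ := Nat.exists_eq_add_of_le hle
      have h3 : b1 ^ (m + k) * Real.exp x = b1 ^ k * (b1 ^ m * Real.exp x) := by ring
      rw [h3]
      exact (hpow1 k _ (hmemIoo m x hlt)).2
    intro x m hlt
    rcases le_total m (M x) with hle | hle
    · exact (key m (M x) hle x hlt).symm
    · exact key (M x) m hle x (hMspec x)
  -- continuity of h
  have hhcont : Continuous h := by
    rw [continuous_iff_continuousAt]
    intro x0
    have hmem0 : b1 ^ (M x0) * Real.exp x0 ∈ Set.Ioo (0:ℝ) 1 := hmemIoo _ _ (hMspec x0)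
    have hcin : Continuous fun x : ℝ => b1 ^ (M x0) * Real.exp x :=
      continuous_const.mul Real.continuous_exp
    have hca : ContinuousAt (fun x : ℝ => g (b1 ^ (M x0) * Real.exp x)) x0 := by
      have hgat : ContinuousAt g (b1 ^ (M x0) * Real.exp x0) :=
        hgcont.continuousAt (isOpen_Ioo.mem_nhds hmem0)
      exact ContinuousAt.comp (g := g) (f := fun x : ℝ => b1 ^ (M x0) * Real.exp x)
        hgat hcin.continuousAt
    apply hca.congr
    have hopen : IsOpen {x : ℝ | b1 ^ (M x0) * Real.exp x < 1} :=
      isOpen_lt hcin continuous_const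
    filter_upwards [hopen.mem_nhds (hMspec x0)] with x hx
    exact hwd x (M x0) hx
  -- periodicity by log b1
  have hper1 : ∀ x, h (x + Real.log b1) = h x := by
    intro x
    have hexp : Real.exp (x + Real.log b1) = Real.exp x * b1 := by
      rw [Real.exp_add, Real.exp_log hb1p]
    have heq : b1 ^ (M (x + Real.log b1)) * Real.exp (x + Real.log b1)
        = b1 ^ (M (x + Real.log b1) + 1) * Real.exp x := by
      rw [hexp]; ring
    have hlt : b1 ^ (M (x + Real.log b1) + 1) * Real.exp x < 1 := by
      rw [← heq]; exact hMspec _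
    calc h (x + Real.log b1)
        = g (b1 ^ (M (x + Real.log b1) + 1) * Real.exp x) := by
          simp only [hhdef]; rw [heq]
      _ = h x := hwd x _ hlt
  -- periodicity by log b2
  have hper2 : ∀ x, h (x + Real.log b2) = h x := by
    intro x
    have hexp : Real.exp (x + Real.log b2) = Real.exp x * b2 := by
      rw [Real.exp_add, Real.exp_log hb2p]
    have hm : b1 ^ (M x) * Real.exp x ∈ Set.Ioo (0:ℝ) 1 := hmemIoo _ _ (hMspec x)
    have heq : b1 ^ (M x) * Real.exp (x + Real.log b2)
        = b2 * (b1 ^ (M x) * Real.exp x) := by rw [hexp]; ring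
    have hlt : b1 ^ (M x) * Real.exp (x + Real.log b2) < 1 := by
      rw [heq]
      exact (hmem b2 hb2p hb2lt _ hm).2
    have e1 : h (x + Real.log b2) = g (b1 ^ (M x) * Real.exp (x + Real.log b2)) :=
      (hwd _ _ hlt).symm
    rw [e1, heq, hstep2 _ hm]
  -- invariance under the subgroup generated by the two logs
  set G := AddSubgroup.closure ({Real.log b1, Real.log b2} : Set ℝ) with hGdef
  have hinv : ∀ w ∈ G, ∀ x, h (x + w) = h x := by
    intro w hw
    induction hw using AddSubgroup.closure_induction with
    | mem w hw =>
      rcases hw with hw | hw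
      · subst hw; exact hper1
      · simp only [Set.mem_singleton_iff] at hw; subst hw; exact hper2
    | zero => intro x; simp
    | add w1 w2 hw1 hw2 ih1 ih2 =>
      intro x
      have : x + (w1 + w2) = (x + w1) + w2 := by ring
      rw [this, ih2, ih1]
    | neg w hw ih =>
      intro x
      have := ih (x + -w)
      simpa using this.symm
  -- the subgroup is dense
  have hlogb1neg : Real.log b1 < 0 := Real.log_neg hb1p hb1lt
  have hlogb2neg : Real.log b2 < 0 := Real.log_neg hb2p hb2lt
  have hlogn1 : Real.log n1 = -(α * Real.log b1) := by
    have := congrArg Real.log h1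
    rw [Real.log_mul hn1ne (ne_of_gt (Real.rpow_pos_of_pos hb1p α)),
      Real.log_rpow hb1p, Real.log_one] at this
    linarith
  have hlogn2 : Real.log n2 = -(α * Real.log b2) := by
    have := congrArg Real.log h2
    rw [Real.log_mul (ne_of_gt hn2p) (ne_of_gt (Real.rpow_pos_of_pos hb2p α)),
      Real.log_rpow hb2p, Real.log_one] at this
    linarith
  have hdense : Dense (G : Set ℝ) := by
    rcases AddSubgroup.dense_or_cyclic G with hd | ⟨a, ha⟩
    · exact hd
    · exfalso
      have hm1 : Real.log b1 ∈ G := AddSubgroup.subset_closure (by simp)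
      have hm2 : Real.log b2 ∈ G := AddSubgroup.subset_closure (by simp)
      rw [ha, AddSubgroup.mem_closure_singleton] at hm1 hm2
      obtain ⟨z1, hz1⟩ := hm1
      obtain ⟨z2, hz2⟩ := hm2
      rw [zsmul_eq_mul] at hz1 hz2
      have ha0 : a ≠ 0 := by
        intro h0; rw [h0, mul_zero] at hz1; linarith
      have hz2ne : (z2:ℝ) ≠ 0 := by
        intro h0; rw [h0, zero_mul] at hz2; linarith
      have hz2ne' : (z2:ℚ) ≠ 0 := by exact_mod_cast fun h => hz2ne (by exact_mod_cast h)
      apply hirr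
      refine ⟨(z1:ℚ) / (z2:ℚ), ?_⟩
      rw [hlogn1, hlogn2, ← hz1, ← hz2]
      push_cast
      field_simp
  -- h is constant
  have hconst : ∀ x, h x = h 0 := by
    intro x
    have hcl : IsClosed {y : ℝ | h y = h 0} := isClosed_eq hhcont continuous_const
    have hsub : (G : Set ℝ) ⊆ {y : ℝ | h y = h 0} := by
      intro w hw
      have := hinv w hw 0
      simpa using this
    have huniv : (Set.univ : Set ℝ) ⊆ {y : ℝ | h y = h 0} := by
      rw [← hdense.closure_eq]
      exact hcl.closure_subset_iff.mpr hsub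
    exact huniv (Set.mem_univ x)
  -- conclude
  refine ⟨h 0, ?_⟩
  intro u hu
  have hu1 : b1 ^ (0:ℕ) * Real.exp (Real.log u) < 1 := by
    rw [pow_zero, one_mul, Real.exp_log hu.1]; exact hu.2
  have hgu : g u = h (Real.log u) := by
    have := hwd (Real.log u) 0 hu1
    rwa [pow_zero, one_mul, Real.exp_log hu.1] at this
  have huα : (0:ℝ) < u ^ α := Real.rpow_pos_of_pos hu.1 α
  have hthis : ψ u / u ^ α = h 0 := by
    rw [← hconst (Real.log u), ← hgu]
  rw [div_eq_iff (ne_of_gt huα)] at hthis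
  linarith
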